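/- Let (a,b) ⊆ ℝ be an open interval (with −∞ ≤ a < b ≤ ∞), V₀ : (a,b) → ℝ, ε, E ∈ ℝ, and u : (a,b) → ℝ twice differentiable with u > 0 and −½u'' + V₀u = εu on (a,b). Set κ = u'/u and, for a twice differentiable ψ : (a,b) → ℝ with −½ψ'' + V₀ψ = Eψ on (a,b), set φ = (−ψ' + κψ)/√2. Assume ψ² and φ² are (improperly) integrable on (a,b), that the product x ↦ ψ(x)φ(x)/√2 tends to 0 as x → a⁺ and as x → b⁻, and that (ψφ)' is integrable on (a,b). Then ∫_a^b φ(x)² dx = (E − ε) ∫_a^b ψ(x)² dx. -/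

import Mathlib

open Filter Real Topology MeasureTheory Set

lemma coe_tendsto_top : Tendsto (fun x : ℝ => (x : EReal)) atTop (𝓝[<] ⊤) := by
  rw [tendsto_nhdsWithin_iff]
  constructor
  · rw [EReal.tendsto_nhds_top_iff_real]
    intro x
    filter_upwards [eventually_gt_atTop x] with y hy
    exact EReal.coe_lt_coe_iff.mpr hy
  · exact Eventually.of_forall fun x => EReal.coe_lt_top x

lemma coe_tendsto_bot : Tendsto (fun x : ℝ => (x : EReal)) atBot (𝓝[>] ⊥) := by
  rw [tendsto_nhdsWithin_iff]
  constructor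
  · rw [EReal.tendsto_nhds_bot_iff_real]
    intro x
    filter_upwards [eventually_lt_atBot x] with y hy
    exact EReal.coe_lt_coe_iff.mpr hy
  · exact Eventually.of_forall fun x => EReal.bot_lt_coe x

lemma coe_tendsto_right (a : ℝ) :
    Tendsto (fun x : ℝ => (x : EReal)) (𝓝[>] a) (𝓝[>] (a : EReal)) := by
  rw [tendsto_nhdsWithin_iff]
  refine ⟨(continuous_coe_real_ereal.tendsto a).mono_left nhdsWithin_le_nhds, ?_⟩
  filter_upwards [self_mem_nhdsWithin] with y hy
  exact EReal.coe_lt_coe_iff.mpr hy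

lemma coe_tendsto_left (b : ℝ) :
    Tendsto (fun x : ℝ => (x : EReal)) (𝓝[<] b) (𝓝[<] (b : EReal)) := by
  rw [tendsto_nhdsWithin_iff]
  refine ⟨(continuous_coe_real_ereal.tendsto b).mono_left nhdsWithin_le_nhds, ?_⟩
  filter_upwards [self_mem_nhdsWithin] with y hy
  exact EReal.coe_lt_coe_iff.mpr hy

lemma int_deriv_zero (a b : EReal) (hab : a < b)
    (I : Set ℝ) (hI : I = {x : ℝ | a < (x : EReal) ∧ (x : EReal) < b})
    (g g' : ℝ → ℝ)
    (hg : ∀ x ∈ I, HasDerivAt g (g' x) x)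
    (hint : IntegrableOn g' I)
    (ha : Tendsto g (Filter.comap (fun x : ℝ => (x : EReal)) (𝓝[>] a)) (𝓝 0))
    (hb : Tendsto g (Filter.comap (fun x : ℝ => (x : EReal)) (𝓝[<] b)) (𝓝 0)) :
    ∫ x in I, g' x = 0 := by
  induction a with
  | bot =>
    have hga : Tendsto g atBot (𝓝 0) := ha.mono_left (tendsto_iff_comap.mp coe_tendsto_bot)
    induction b with
    | bot => exact absurd hab (by simp)
    | coe b' =>
      have hgb : Tendsto g (𝓝[<] b') (𝓝 0) :=
        hb.mono_left (tendsto_iff_comap.mp (coe_tendsto_left b'))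
      have hIe : I = Iio b' := by
        rw [hI]; ext x; simp [EReal.coe_lt_coe_iff]
      subst hIe
      set f : ℝ → ℝ := Function.update g b' 0 with hf
      have hcont : ContinuousWithinAt f (Iic b') b' := by
        rw [hf, continuousWithinAt_update_same, Iic_diff_right]
        exact hgb
      have hderiv : ∀ x ∈ Iio b', HasDerivAt f (g' x) x := by
        intro x hx
        refine (hg x hx).congr_of_eventuallyEq ?_
        filter_upwards [Iio_mem_nhds hx] with y hy
        exact Function.update_of_ne (ne_of_lt hy) _ _
      have f'int : IntegrableOn g' (Iic b') := by
        rw [IntegrableOn, ← Measure.restrict_congr_set Iio_ae_eq_Iic]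
        exact hint
      have hfbot : Tendsto f atBot (𝓝 0) := by
        refine hga.congr' ?_
        filter_upwards [Iio_mem_atBot b'] with x (hx : x < b')
        exact (Function.update_of_ne (ne_of_lt hx) _ _).symm
      have := integral_Iic_of_hasDerivAt_of_tendsto hcont hderiv f'int hfbot
      rw [setIntegral_congr_set Iio_ae_eq_Iic, this, hf, Function.update_self, sub_zero]
    | top =>
      have hgb : Tendsto g atTop (𝓝 0) := hb.mono_left (tendsto_iff_comap.mp coe_tendsto_top)
      have hIe : I = univ := by
        rw [hI]; ext x; simp [EReal.bot_lt_coe, EReal.coe_lt_top]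
      subst hIe
      rw [setIntegral_univ]
      have := integral_of_hasDerivAt_of_tendsto (fun x => hg x trivial)
        (integrableOn_univ.mp hint) hga hgb
      rw [this, sub_zero]
  | coe a' =>
    have hga : Tendsto g (𝓝[>] a') (𝓝 0) :=
      ha.mono_left (tendsto_iff_comap.mp (coe_tendsto_right a'))
    induction b with
    | bot => exact absurd hab (by simp)
    | coe b' =>
      have hgb : Tendsto g (𝓝[<] b') (𝓝 0) :=
        hb.mono_left (tendsto_iff_comap.mp (coe_tendsto_left b'))
      have hab' : a' < b' := EReal.coe_lt_coe_iff.mp hab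
      have hIe : I = Ioo a' b' := by
        rw [hI]; ext x; simp [EReal.coe_lt_coe_iff]
      subst hIe
      have hint' : IntervalIntegrable g' volume a' b' := by
        rw [intervalIntegrable_iff_integrableOn_Ioo_of_le hab'.le]
        exact hint
      have := intervalIntegral.integral_eq_sub_of_hasDerivAt_of_tendsto hab' hg hint' hga hgb
      rw [intervalIntegral.integral_of_le hab'.le] at this
      rw [setIntegral_congr_set Ioo_ae_eq_Ioc, this, sub_zero]
    | top =>
      have hgb : Tendsto g atTop (𝓝 0) := hb.mono_left (tendsto_iff_comap.mp coe_tendsto_top)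
      have hIe : I = Ioi a' := by
        rw [hI]; ext x; simp [EReal.coe_lt_coe_iff, EReal.coe_lt_top]
      subst hIe
      set f : ℝ → ℝ := Function.update g a' 0 with hf
      have hcont : ContinuousWithinAt f (Ici a') a' := by
        rw [hf, continuousWithinAt_update_same, Ici_sdiff_left]
        exact hga
      have hderiv : ∀ x ∈ Ioi a', HasDerivAt f (g' x) x := by
        intro x hx
        refine (hg x hx).congr_of_eventuallyEq ?_
        filter_upwards [Ioi_mem_nhds hx] with y hy
        exact Function.update_of_ne (ne_of_gt hy) _ _
      have hftop : Tendsto f atTop (𝓝 0) := by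
        refine hgb.congr' ?_
        filter_upwards [Ioi_mem_atTop a'] with x (hx : a' < x)
        exact (Function.update_of_ne (ne_of_gt hx) _ _).symm
      have := integral_Ioi_of_hasDerivAt_of_tendsto hcont hderiv hint hftop
      rw [this, hf, Function.update_self, zero_sub, neg_zero]
  | top => exact absurd hab (by simp)

lemma sqrt2_aux (x y q r : ℝ) :
    (x * (q / Real.sqrt 2) + y * (r / Real.sqrt 2)) / Real.sqrt 2 = (x * q + y * r) / 2 := by
  have h2 : Real.sqrt 2 * Real.sqrt 2 = 2 := Real.mul_self_sqrt (by norm_num)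
  have hs : Real.sqrt 2 ≠ 0 := by positivity
  field_simp
  rw [sq, h2]; ring

lemma sqrt2_aux2 (q : ℝ) : (q / Real.sqrt 2) ^ 2 = q ^ 2 / 2 := by
  rw [div_pow, Real.sq_sqrt (by norm_num : (2:ℝ) ≥ 0)]

lemma darboux_alg (U U' U'' P P' P'' V ε E : ℝ) (hU : U ≠ 0)
    (hUeq : U'' = 2 * (V - ε) * U) (hPeq : P'' = 2 * (V - E) * P) :
    (P' * ((-P' + U' / U * P) / Real.sqrt 2)
      + P * ((-P'' + ((U'' * U - U' * U') / U ^ 2 * P + U' / U * P')) / Real.sqrt 2)) / Real.sqrt 2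
    = (E - ε) * P ^ 2 - ((-P' + U' / U * P) / Real.sqrt 2) ^ 2 := by
  rw [sqrt2_aux, sqrt2_aux2]
  subst hUeq hPeq
  field_simp
  ring

theorem statement11 (a b : EReal) (hab : a < b)
    (I : Set ℝ) (hI : I = {x : ℝ | a < (x : EReal) ∧ (x : EReal) < b})
    (V₀ : ℝ → ℝ) (ε E : ℝ) (u : ℝ → ℝ)
    (hu : ∀ x ∈ I, DifferentiableAt ℝ u x ∧ DifferentiableAt ℝ (deriv u) x)
    (hupos : ∀ x ∈ I, 0 < u x)
    (hueq : ∀ x ∈ I, -(1 / 2) * deriv (deriv u) x + V₀ x * u x = ε * u x)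
    (κ : ℝ → ℝ) (hκ : κ = fun x => deriv u x / u x)
    (ψ : ℝ → ℝ)
    (hψ : ∀ x ∈ I, DifferentiableAt ℝ ψ x ∧ DifferentiableAt ℝ (deriv ψ) x)
    (hψeq : ∀ x ∈ I, -(1 / 2) * deriv (deriv ψ) x + V₀ x * ψ x = E * ψ x)
    (φ : ℝ → ℝ) (hφ : φ = fun x => (-(deriv ψ x) + κ x * ψ x) / Real.sqrt 2)
    (hψint : IntegrableOn (fun x => ψ x ^ 2) I)
    (hφint : IntegrableOn (fun x => φ x ^ 2) I)
    (hlima : Tendsto (fun x : ℝ => ψ x * φ x / Real.sqrt 2)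
      (Filter.comap (fun x : ℝ => (x : EReal)) (𝓝[>] a)) (𝓝 0))
    (hlimb : Tendsto (fun x : ℝ => ψ x * φ x / Real.sqrt 2)
      (Filter.comap (fun x : ℝ => (x : EReal)) (𝓝[<] b)) (𝓝 0))
    (hderint : IntegrableOn (deriv fun x => ψ x * φ x) I) :
    ∫ x in I, φ x ^ 2 = (E - ε) * ∫ x in I, ψ x ^ 2 := by
  have hIopen : IsOpen I := by
    rw [hI]
    exact isOpen_Ioo.preimage continuous_coe_real_ereal
  set g' : ℝ → ℝ := fun x => deriv (fun x => ψ x * φ x) x / Real.sqrt 2 with hg'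
  -- pointwise identity
  have key : ∀ x ∈ I, g' x = (E - ε) * ψ x ^ 2 - φ x ^ 2 := by
    intro x hx
    obtain ⟨hu1, hu2⟩ := hu x hx
    obtain ⟨hψ1, hψ2⟩ := hψ x hx
    have hune : u x ≠ 0 := (hupos x hx).ne'
    have hκd : HasDerivAt κ
        ((deriv (deriv u) x * u x - deriv u x * deriv u x) / u x ^ 2) x := by
      rw [hκ]
      exact hu2.hasDerivAt.div hu1.hasDerivAt hune
    have hφd : HasDerivAt φ
        ((-(deriv (deriv ψ) x)
          + ((deriv (deriv u) x * u x - deriv u x * deriv u x) / u x ^ 2 * ψ x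
            + κ x * deriv ψ x)) / Real.sqrt 2) x := by
      rw [hφ]
      exact ((hψ2.hasDerivAt.neg.add (hκd.mul hψ1.hasDerivAt)).div_const _)
    have hprod : HasDerivAt (fun x => ψ x * φ x)
        (deriv ψ x * φ x + ψ x * ((-(deriv (deriv ψ) x)
          + ((deriv (deriv u) x * u x - deriv u x * deriv u x) / u x ^ 2 * ψ x
            + κ x * deriv ψ x)) / Real.sqrt 2)) x :=
      hψ1.hasDerivAt.mul hφd
    rw [hg']
    simp only [hprod.deriv]
    have hUeq : deriv (deriv u) x = 2 * (V₀ x - ε) * u x := by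
      have := hueq x hx; linarith
    have hPeq : deriv (deriv ψ) x = 2 * (V₀ x - E) * ψ x := by
      have := hψeq x hx; linarith
    have := darboux_alg (u x) (deriv u x) (deriv (deriv u) x) (ψ x) (deriv ψ x)
      (deriv (deriv ψ) x) (V₀ x) ε E hune hUeq hPeq
    rw [hφ, hκ]
    simpa using this
  have hg : ∀ x ∈ I, HasDerivAt (fun x => ψ x * φ x / Real.sqrt 2) (g' x) x := by
    intro x hx
    obtain ⟨hu1, hu2⟩ := hu x hx
    obtain ⟨hψ1, hψ2⟩ := hψ x hx
    have hune : u x ≠ 0 := (hupos x hx).ne'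
    have hφdiff : DifferentiableAt ℝ φ x := by
      rw [hφ, hκ]
      exact (hψ2.neg.add ((hu2.div hu1 hune).mul hψ1)).div_const _
    exact (hψ1.mul hφdiff).hasDerivAt.div_const _
  have hint : IntegrableOn g' I := hderint.div_const _
  have hzero := int_deriv_zero a b hab I hI _ g' hg hint hlima hlimb
  rw [setIntegral_congr_fun hIopen.measurableSet key] at hzero
  rw [MeasureTheory.integral_sub ((hψint.const_mul (E - ε))) hφint,
    MeasureTheory.integral_const_mul] at hzero
  linarith
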